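/- The polynomial P(z₁, z₂) = (1/2880)·[720(z₁² − 2)² + z₂⁴((z₂² + 8z₁)² + 56z₁² + 240)] vanishes at a real point (z₁, z₂) if and only if (z₁, z₂) = (√2, 0) or (z₁, z₂) = (−√2, 0). -/
import Mathlib


/-- The polynomial `P(z₁, z₂) = (1/2880)·[720(z₁² − 2)² + z₂⁴((z₂² + 8z₁)² + 56z₁² + 240)]`
vanishes at a real point `(z₁, z₂)` iff `(z₁, z₂) = (±√2, 0)`. -/
theorem degenerate_root_set (z₁ z₂ : ℝ) :
    (1 / 2880) * (720 * (z₁ ^ 2 - 2) ^ 2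
        + z₂ ^ 4 * ((z₂ ^ 2 + 8 * z₁) ^ 2 + 56 * z₁ ^ 2 + 240)) = 0
      ↔ (z₁ = Real.sqrt 2 ∧ z₂ = 0) ∨ (z₁ = -Real.sqrt 2 ∧ z₂ = 0) := by
  constructor
  · intro h
    have h1 : (720 : ℝ) * (z₁ ^ 2 - 2) ^ 2
        + z₂ ^ 4 * ((z₂ ^ 2 + 8 * z₁) ^ 2 + 56 * z₁ ^ 2 + 240) = 0 := by linarith
    have ha : (0:ℝ) ≤ 720 * (z₁ ^ 2 - 2) ^ 2 := by positivity
    have hb : (0:ℝ) ≤ z₂ ^ 4 * ((z₂ ^ 2 + 8 * z₁) ^ 2 + 56 * z₁ ^ 2 + 240) := by positivity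
    have ha0 : (720 : ℝ) * (z₁ ^ 2 - 2) ^ 2 = 0 := by linarith
    have hb0 : z₂ ^ 4 * ((z₂ ^ 2 + 8 * z₁) ^ 2 + 56 * z₁ ^ 2 + 240) = 0 := by linarith
    have hz2 : z₂ = 0 := by
      have hpos : (0:ℝ) < (z₂ ^ 2 + 8 * z₁) ^ 2 + 56 * z₁ ^ 2 + 240 := by positivity
      have := mul_eq_zero.mp hb0
      rcases this with h' | h'
      · exact pow_eq_zero_iff (by norm_num) |>.mp h'
      · linarith
    have hz1 : z₁ ^ 2 = 2 := by nlinarith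
    have : z₁ = Real.sqrt 2 ∨ z₁ = -Real.sqrt 2 := by
      have hs : Real.sqrt 2 ^ 2 = 2 := Real.sq_sqrt (by norm_num)
      have : (z₁ - Real.sqrt 2) * (z₁ + Real.sqrt 2) = 0 := by nlinarith
      rcases mul_eq_zero.mp this with h' | h'
      · left; linarith
      · right; linarith
    rcases this with h' | h'
    · exact Or.inl ⟨h', hz2⟩
    · exact Or.inr ⟨h', hz2⟩
  · rintro (⟨h1, h2⟩ | ⟨h1, h2⟩) <;> subst h1 <;> subst h2 <;>
      simp
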